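/- Let μ be a Borel probability measure on ℝ² with first marginal μ⁽¹⁾. If λ_n ∈ ℂ \ ℝ is a sequence with |λ_n| → ∞ and sup_n √(1+(Re λ_n/Im λ_n)²) < ∞ (non-tangential convergence to infinity), then for every fixed z with Im z ≠ 0, λ_n G_μ(z, λ_n) → G_{μ⁽¹⁾}(z) as n → ∞. -/

import Mathlib

open MeasureTheory Complex Filter Topology

theorem marginal_cauchy_nontangential_limit (μ : Measure (ℝ × ℝ)) [IsProbabilityMeasure μ]
    (lam : ℕ → ℂ) (him : ∀ n, (lam n).im ≠ 0)
    (habs : Tendsto (fun n => ‖lam n‖) atTop atTop)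
    (hnt : ∃ C : ℝ, ∀ n, Real.sqrt (1 + ((lam n).re / (lam n).im) ^ 2) ≤ C)
    (z : ℂ) (hz : z.im ≠ 0) :
    Tendsto (fun n => lam n * ∫ p : ℝ × ℝ, ((z - (p.1 : ℂ)) * (lam n - (p.2 : ℂ)))⁻¹ ∂μ)
      atTop (𝓝 (∫ x : ℝ, (z - (x : ℂ))⁻¹ ∂(μ.map Prod.fst))) := by
  obtain ⟨C, hC⟩ := hnt
  -- |lam n| ≤ C * |(lam n).im|
  have hlam_bound : ∀ n, ‖lam n‖ ≤ C * |(lam n).im| := by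
    intro n
    have him' : (lam n).im ≠ 0 := him n
    have heq : ‖lam n‖
        = Real.sqrt (1 + ((lam n).re / (lam n).im) ^ 2) * |(lam n).im| := by
      rw [Complex.norm_def, Complex.normSq_apply, ← Real.sqrt_sq_eq_abs,
        ← Real.sqrt_mul (by positivity)]
      congr 1
      field_simp
      ring
    rw [heq]
    gcongr
    exact hC n
  -- nonvanishing of denominators
  have hzs : ∀ s : ℝ, z - (s : ℂ) ≠ 0 := by
    intro s h
    apply hz
    have : (z - (s : ℂ)).im = 0 := by rw [h]; simp
    simpa using this
  have hlt : ∀ n, ∀ t : ℝ, lam n - (t : ℂ) ≠ 0 := by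
    intro n t h
    apply him n
    have : (lam n - (t : ℂ)).im = 0 := by rw [h]; simp
    simpa using this
  -- lower bounds on denominators
  have hzs_lb : ∀ s : ℝ, |z.im| ≤ ‖z - (s : ℂ)‖ := by
    intro s
    have := Complex.abs_im_le_norm (z - (s : ℂ))
    simpa using this
  have hlt_lb : ∀ n, ∀ t : ℝ, |(lam n).im| ≤ ‖lam n - (t : ℂ)‖ := by
    intro n t
    have := Complex.abs_im_le_norm (lam n - (t : ℂ))
    simpa using this
  have hCpos : (0:ℝ) ≤ C := le_trans (Real.sqrt_nonneg _) (hC 0)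
  -- rewrite the target integral as an integral over μ
  have hmeas1 : AEStronglyMeasurable (fun x : ℝ => (z - (x : ℂ))⁻¹) (μ.map Prod.fst) :=
    (Measurable.inv (by fun_prop)).aestronglyMeasurable
  have hmap : (∫ x : ℝ, (z - (x : ℂ))⁻¹ ∂(μ.map Prod.fst))
      = ∫ p : ℝ × ℝ, (z - (p.1 : ℂ))⁻¹ ∂μ := by
    rw [integral_map measurable_fst.aemeasurable hmeas1]
  rw [hmap]
  -- pull lam n inside the integral
  have hrw : ∀ n, lam n * ∫ p : ℝ × ℝ, ((z - (p.1 : ℂ)) * (lam n - (p.2 : ℂ)))⁻¹ ∂μ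
      = ∫ p : ℝ × ℝ, lam n * ((z - (p.1 : ℂ)) * (lam n - (p.2 : ℂ)))⁻¹ ∂μ := by
    intro n
    rw [integral_const_mul]
  simp only [hrw]
  -- dominated convergence
  apply tendsto_integral_of_dominated_convergence (fun _ => C / |z.im|)
  · intro n
    exact ((measurable_const.mul (Measurable.inv (by fun_prop))).aestronglyMeasurable)
  · exact integrable_const _
  · intro n
    filter_upwards with p
    rw [norm_mul, norm_inv]
    have h1 : ‖z - (p.1 : ℂ)‖ = ‖z - (p.1 : ℂ)‖ := rfl
    have h2 : ‖(z - (p.1 : ℂ)) * (lam n - (p.2 : ℂ))‖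
        = ‖z - (p.1 : ℂ)‖ * ‖lam n - (p.2 : ℂ)‖ := by
      simp [map_mul]
    have h3 : ‖lam n‖ = ‖lam n‖ := rfl
    rw [h2, h3]
    rw [div_eq_mul_inv]
    have hd1 : (0:ℝ) < |z.im| := abs_pos.mpr hz
    have hd2 : (0:ℝ) < |(lam n).im| := abs_pos.mpr (him n)
    have hd3 : (0:ℝ) < ‖z - (p.1 : ℂ)‖ :=
      lt_of_lt_of_le hd1 (hzs_lb p.1)
    have hd4 : (0:ℝ) < ‖lam n - (p.2 : ℂ)‖ :=
      lt_of_lt_of_le hd2 (hlt_lb n p.2)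
    calc ‖lam n‖ * (‖z - (p.1 : ℂ)‖ * ‖lam n - (p.2 : ℂ)‖)⁻¹
        ≤ (C * |(lam n).im|) * (|z.im| * |(lam n).im|)⁻¹ := by
          apply mul_le_mul (hlam_bound n) ?_ (by positivity) (by positivity)
          exact inv_anti₀ (mul_pos hd1 hd2)
            (mul_le_mul (hzs_lb p.1) (hlt_lb n p.2) hd2.le (norm_nonneg _))
      _ = C * |z.im|⁻¹ := by field_simp
  · -- pointwise convergence
    filter_upwards with p
    set s := p.1
    set t := p.2
    have key : Tendsto (fun n => (lam n - (t : ℂ))⁻¹) atTop (𝓝 0) := by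
      rw [tendsto_zero_iff_norm_tendsto_zero]
      have habs' : Tendsto (fun n => ‖lam n - (t : ℂ)‖) atTop atTop := by
        apply tendsto_atTop_mono (fun n => ?_)
          (tendsto_atTop_add_const_right atTop (-(‖(t:ℂ)‖)) habs)
        have h := norm_sub_norm_le (lam n) ((t : ℂ))
        linarith
      have : Tendsto (fun n => (‖lam n - (t : ℂ)‖)⁻¹) atTop (𝓝 0) :=
        tendsto_inv_atTop_zero.comp habs'
      simpa [norm_inv] using this
    have hsplit : ∀ n, lam n * ((z - (s : ℂ)) * (lam n - (t : ℂ)))⁻¹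
        = (z - (s : ℂ))⁻¹ * (1 + (t : ℂ) * (lam n - (t : ℂ))⁻¹) := by
      intro n
      rw [mul_inv, show lam n * ((z - (s : ℂ))⁻¹ * (lam n - (t : ℂ))⁻¹)
        = (z - (s : ℂ))⁻¹ * (lam n * (lam n - (t : ℂ))⁻¹) by ring]
      congr 1
      calc lam n * (lam n - (t : ℂ))⁻¹
          = ((lam n - (t : ℂ)) + (t : ℂ)) * (lam n - (t : ℂ))⁻¹ := by ring_nf
        _ = 1 + (t : ℂ) * (lam n - (t : ℂ))⁻¹ := by
            rw [add_mul, mul_inv_cancel₀ (hlt n t)]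
    simp only [hsplit]
    have : Tendsto (fun n => (z - (s : ℂ))⁻¹ * (1 + (t : ℂ) * (lam n - (t : ℂ))⁻¹)) atTop
        (𝓝 ((z - (s : ℂ))⁻¹ * (1 + (t : ℂ) * 0))) :=
      tendsto_const_nhds.mul (tendsto_const_nhds.add (tendsto_const_nhds.mul key))
    simpa using this
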